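/- Let k > 0, let α ∈ ℝ³ be horizontal (α·e₃ = 0), let β ∈ ℂ with β ≠ 0 and α·α + β² = k², and set ζ = α + β e₃. Let A ∈ ℂ³ be tangential (A·e₃ = 0) and define C = A×e₃ + β⁻¹((e₃×A)·α) e₃ and E(x) = C exp(i ζ·x). Then ζ·C = 0 and e₃×C = A; consequently E satisfies div E ≡ 0 and curl curl E − k²E ≡ 0 on ℝ³, and e₃×E(x) = A exp(i ζ·x) for all x ∈ ℝ³. -/

import Mathlib

/-- Partial derivative `∂ⱼf` of a scalar field `f : ℝ³ → ℂ` in the `j`-th coordinate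
direction, defined via the one-dimensional derivative. -/
noncomputable def pd (j : Fin 3) (f : (Fin 3 → ℝ) → ℂ) (x : Fin 3 → ℝ) : ℂ :=
  deriv (fun t : ℝ => f (Function.update x j t)) (x j)

/-- `curl E = (∂₂E₃ − ∂₃E₂, ∂₃E₁ − ∂₁E₃, ∂₁E₂ − ∂₂E₁)`. -/
noncomputable def curl3 (E : (Fin 3 → ℝ) → Fin 3 → ℂ) (x : Fin 3 → ℝ) : Fin 3 → ℂ :=
  ![pd 1 (fun y => E y 2) x - pd 2 (fun y => E y 1) x,
    pd 2 (fun y => E y 0) x - pd 0 (fun y => E y 2) x,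
    pd 0 (fun y => E y 1) x - pd 1 (fun y => E y 0) x]

/-- `div E = ∂₁E₁ + ∂₂E₂ + ∂₃E₃`. -/
noncomputable def div3 (E : (Fin 3 → ℝ) → Fin 3 → ℂ) (x : Fin 3 → ℝ) : ℂ :=
  pd 0 (fun y => E y 0) x + pd 1 (fun y => E y 1) x + pd 2 (fun y => E y 2) x

/-- Bilinear dot product on `ℂ³` (no conjugation). -/
def cdot (a b : Fin 3 → ℂ) : ℂ := a 0 * b 0 + a 1 * b 1 + a 2 * b 2

/-- Bilinearly extended cross product on `ℂ³`. -/
def ccross (a b : Fin 3 → ℂ) : Fin 3 → ℂ :=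
  ![a 1 * b 2 - a 2 * b 1, a 2 * b 0 - a 0 * b 2, a 0 * b 1 - a 1 * b 0]

/-- `e₃ = (0,0,1)` in `ℂ³`. -/
def e3c : Fin 3 → ℂ := ![0, 0, 1]


lemma hasDeriv_aux (C a b : ℂ) (t : ℝ) :
    HasDerivAt (fun s : ℝ => C * Complex.exp (Complex.I * (a * (s:ℂ) + b)))
      (Complex.I * a * (C * Complex.exp (Complex.I * (a * (t:ℂ) + b)))) t := by
  have h1 : HasDerivAt (fun z : ℂ => Complex.I * (a * z + b)) (Complex.I * a) (t:ℂ) := by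
    simpa using (((hasDerivAt_id (t:ℂ)).const_mul a).add_const b).const_mul Complex.I
  have h : HasDerivAt (fun z : ℂ => C * Complex.exp (Complex.I * (a * z + b)))
      (Complex.exp (Complex.I * (a * (t:ℂ) + b)) * (Complex.I * a) * C) (t:ℂ) := by
    simpa [mul_comm] using (h1.cexp).const_mul C
  have := h.comp_ofReal
  convert this using 1
  ring

lemma pd_exp (C : ℂ) (ζ : Fin 3 → ℂ) (j : Fin 3) (x : Fin 3 → ℝ) :
    pd j (fun y => C * Complex.exp (Complex.I * cdot ζ (fun i => (y i : ℂ)))) x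
      = Complex.I * ζ j * (C * Complex.exp (Complex.I * cdot ζ (fun i => (x i : ℂ)))) := by
  fin_cases j
  · show deriv (fun t : ℝ => C * Complex.exp (Complex.I * cdot ζ (fun i => ((Function.update x 0 t) i : ℂ)))) (x 0)
        = Complex.I * ζ 0 * (C * Complex.exp (Complex.I * cdot ζ (fun i => (x i : ℂ))))
    have he : (fun t : ℝ => C * Complex.exp (Complex.I * cdot ζ (fun i => ((Function.update x 0 t) i : ℂ))))
        = fun t : ℝ => C * Complex.exp (Complex.I * (ζ 0 * (t:ℂ) + (ζ 1 * (x 1 : ℂ) + ζ 2 * (x 2 : ℂ)))) := by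
      funext t
      simp only [cdot, Function.update_self,
        Function.update_of_ne (show (1:Fin 3) ≠ 0 by decide),
        Function.update_of_ne (show (2:Fin 3) ≠ 0 by decide)]
      ring_nf
    rw [he, (hasDeriv_aux C (ζ 0) (ζ 1 * (x 1 : ℂ) + ζ 2 * (x 2 : ℂ)) (x 0)).deriv]
    simp only [cdot]
    ring_nf
  · show deriv (fun t : ℝ => C * Complex.exp (Complex.I * cdot ζ (fun i => ((Function.update x 1 t) i : ℂ)))) (x 1)
        = Complex.I * ζ 1 * (C * Complex.exp (Complex.I * cdot ζ (fun i => (x i : ℂ))))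
    have he : (fun t : ℝ => C * Complex.exp (Complex.I * cdot ζ (fun i => ((Function.update x 1 t) i : ℂ))))
        = fun t : ℝ => C * Complex.exp (Complex.I * (ζ 1 * (t:ℂ) + (ζ 0 * (x 0 : ℂ) + ζ 2 * (x 2 : ℂ)))) := by
      funext t
      simp only [cdot, Function.update_self,
        Function.update_of_ne (show (0:Fin 3) ≠ 1 by decide),
        Function.update_of_ne (show (2:Fin 3) ≠ 1 by decide)]
      ring_nf
    rw [he, (hasDeriv_aux C (ζ 1) (ζ 0 * (x 0 : ℂ) + ζ 2 * (x 2 : ℂ)) (x 1)).deriv]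
    simp only [cdot]
    ring_nf
  · show deriv (fun t : ℝ => C * Complex.exp (Complex.I * cdot ζ (fun i => ((Function.update x 2 t) i : ℂ)))) (x 2)
        = Complex.I * ζ 2 * (C * Complex.exp (Complex.I * cdot ζ (fun i => (x i : ℂ))))
    have he : (fun t : ℝ => C * Complex.exp (Complex.I * cdot ζ (fun i => ((Function.update x 2 t) i : ℂ))))
        = fun t : ℝ => C * Complex.exp (Complex.I * (ζ 2 * (t:ℂ) + (ζ 0 * (x 0 : ℂ) + ζ 1 * (x 1 : ℂ)))) := by
      funext t
      simp only [cdot, Function.update_self,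
        Function.update_of_ne (show (0:Fin 3) ≠ 2 by decide),
        Function.update_of_ne (show (1:Fin 3) ≠ 2 by decide)]
      ring_nf
    rw [he, (hasDeriv_aux C (ζ 2) (ζ 0 * (x 0 : ℂ) + ζ 1 * (x 1 : ℂ)) (x 2)).deriv]
    simp only [cdot]
    ring_nf

lemma curl_exp (C ζ : Fin 3 → ℂ) :
    curl3 (fun x j => C j * Complex.exp (Complex.I * cdot ζ (fun i => (x i : ℂ))))
      = fun x j => (Complex.I * ccross ζ C j) * Complex.exp (Complex.I * cdot ζ (fun i => (x i : ℂ))) := by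
  funext x j
  fin_cases j <;> simp [curl3, ccross, pd_exp] <;> ring

/-- Construction of an outgoing Rayleigh mode with prescribed rotated tangential trace:
for horizontal `α`, `β ≠ 0` with `α·α + β² = k²`, `ζ = α + βe₃`, tangential `A`, and
`C = A×e₃ + β⁻¹((e₃×A)·α)e₃`, `E(x) = C exp(iζ·x)`, one has `ζ·C = 0`, `e₃×C = A`,
`div E ≡ 0`, `curl curl E − k²E ≡ 0`, and `e₃×E(x) = A exp(iζ·x)`. -/
theorem rayleigh_mode_construction (k : ℝ) (hk : 0 < k)
    (α : Fin 3 → ℝ) (hα : α 2 = 0) (β : ℂ) (hβ : β ≠ 0)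
    (hdisp : cdot (fun j => (α j : ℂ)) (fun j => (α j : ℂ)) + β^2 = (k : ℂ)^2)
    (A : Fin 3 → ℂ) (hA : A 2 = 0)
    (ζ : Fin 3 → ℂ) (hζ : ζ = fun j => (α j : ℂ) + β * e3c j)
    (C : Fin 3 → ℂ)
    (hC : C = fun j => ccross A e3c j + β⁻¹ * cdot (ccross e3c A) (fun i => (α i : ℂ)) * e3c j)
    (E : (Fin 3 → ℝ) → Fin 3 → ℂ)
    (hE : E = fun x j => C j * Complex.exp (Complex.I * cdot ζ (fun i => (x i : ℂ)))) :
    cdot ζ C = 0 ∧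
    ccross e3c C = A ∧
    (∀ x : Fin 3 → ℝ, div3 E x = 0) ∧
    (∀ (x : Fin 3 → ℝ) (j : Fin 3), curl3 (curl3 E) x j - (k : ℂ)^2 * E x j = 0) ∧
    (∀ x : Fin 3 → ℝ,
      ccross e3c (E x) = fun j => A j * Complex.exp (Complex.I * cdot ζ (fun i => (x i : ℂ)))) := by
  have hζC : cdot ζ C = 0 := by
    subst hζ hC
    simp only [cdot, ccross, e3c, Matrix.cons_val_zero, Matrix.cons_val_one, Matrix.head_cons,
      Matrix.cons_val_two, Matrix.tail_cons, hα, Complex.ofReal_zero]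
    field_simp
    ring
  have hζζ : cdot ζ ζ = (k:ℂ)^2 := by
    subst hζ
    simp only [cdot, e3c, Matrix.cons_val_zero, Matrix.cons_val_one, Matrix.head_cons,
      Matrix.cons_val_two, Matrix.tail_cons, hα] at hdisp ⊢
    push_cast at hdisp ⊢
    linear_combination hdisp
  have h2 : ccross e3c C = A := by
    funext j
    subst hC
    fin_cases j <;>
      simp [ccross, e3c, cdot, hA] <;> ring
  refine ⟨hζC, h2, ?_, ?_, ?_⟩
  · intro x
    subst hE
    simp only [div3, pd_exp]
    have := hζC
    simp only [cdot] at this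
    linear_combination Complex.I * Complex.exp (Complex.I * cdot ζ (fun i => (x i : ℂ))) * this
  · intro x j
    subst hE
    rw [curl_exp, curl_exp]
    have hc := hζC
    have hz := hζζ
    simp only [cdot] at hc hz
    fin_cases j <;>
      simp only [ccross, Fin.isValue, Fin.zero_eta, Fin.mk_one, Fin.reduceFinMk,
        Matrix.cons_val_zero, Matrix.cons_val_one, Matrix.head_cons, Matrix.cons_val_two,
        Matrix.tail_cons]
    · linear_combination (-(Complex.exp (Complex.I * cdot ζ (fun i => (x i : ℂ)))) * ζ 0) * hc +
        Complex.exp (Complex.I * cdot ζ (fun i => (x i : ℂ))) * C 0 * hz +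
        (ζ 1 * ζ 0 * C 1 * Complex.exp (Complex.I * cdot ζ (fun i => (x i : ℂ))) - ζ 1^2 * C 0 * Complex.exp (Complex.I * cdot ζ (fun i => (x i : ℂ))) + ζ 0 * ζ 2 * C 2 * Complex.exp (Complex.I * cdot ζ (fun i => (x i : ℂ))) - ζ 2^2 * C 0 * Complex.exp (Complex.I * cdot ζ (fun i => (x i : ℂ)))) * Complex.I_sq
    · linear_combination (-(Complex.exp (Complex.I * cdot ζ (fun i => (x i : ℂ)))) * ζ 1) * hc +
        Complex.exp (Complex.I * cdot ζ (fun i => (x i : ℂ))) * C 1 * hz +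
        (ζ 0 * ζ 1 * C 0 * Complex.exp (Complex.I * cdot ζ (fun i => (x i : ℂ))) - ζ 0^2 * C 1 * Complex.exp (Complex.I * cdot ζ (fun i => (x i : ℂ))) + ζ 1 * ζ 2 * C 2 * Complex.exp (Complex.I * cdot ζ (fun i => (x i : ℂ))) - ζ 2^2 * C 1 * Complex.exp (Complex.I * cdot ζ (fun i => (x i : ℂ)))) * Complex.I_sq
    · linear_combination (-(Complex.exp (Complex.I * cdot ζ (fun i => (x i : ℂ)))) * ζ 2) * hc +
        Complex.exp (Complex.I * cdot ζ (fun i => (x i : ℂ))) * C 2 * hz +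
        (ζ 0 * ζ 2 * C 0 * Complex.exp (Complex.I * cdot ζ (fun i => (x i : ℂ))) - ζ 0^2 * C 2 * Complex.exp (Complex.I * cdot ζ (fun i => (x i : ℂ))) + ζ 2 * ζ 1 * C 1 * Complex.exp (Complex.I * cdot ζ (fun i => (x i : ℂ))) - ζ 1^2 * C 2 * Complex.exp (Complex.I * cdot ζ (fun i => (x i : ℂ)))) * Complex.I_sq
  · intro x
    funext j
    subst hE
    have : ccross e3c (fun j => C j * Complex.exp (Complex.I * cdot ζ (fun i => (x i : ℂ)))) j
        = ccross e3c C j * Complex.exp (Complex.I * cdot ζ (fun i => (x i : ℂ))) := by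
      fin_cases j <;> simp [ccross] <;> ring
    rw [this, h2]
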